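/- For a stationary ergodic process X with law P_X and its k-th order Markov approximation P_X^{(k)}, the relative entropy rate satisfies D(P_X ‖ P_X^{(k)}) = H_k − H∞, where H_k = H(X_0 | X_{−k}^{−1}) is the k-th order conditional entropy and H∞ = lim_k H_k is the entropy rate; consequently D(P_X ‖ P_X^{(k)}) → 0 as k → ∞. -/

import Mathlib

open Finset Filter

/-- The window `x_{i}, …, x_{i+m-1}` of a length-`n` string, padded with an
arbitrary symbol out of range. -/
noncomputable def window {A : Type*} [Nonempty A] {n : ℕ}
    (x : Fin n → A) (i m : ℕ) : Fin m → A :=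
  fun j => if h : i + j.1 < n then x ⟨i + j.1, h⟩ else Classical.arbitrary A

/-- `k`-th order conditional entropy `H_k = H(X_k | X_0^{k-1})` (in bits) of a
process given by its family `μ` of finite-dimensional marginals. -/
noncomputable def condEntropy {A : Type*} [Fintype A]
    (μ : ∀ m, (Fin m → A) → ℝ) (k : ℕ) : ℝ :=
  ∑ x : Fin (k + 1) → A, μ (k + 1) x * Real.logb 2 (μ k (Fin.init x) / μ (k + 1) x)

/-- The `k`-th order Markov approximation of the `n`-block marginal of the
process `μ`. -/
noncomputable def markovApproxFam {A : Type*} [Fintype A] [Nonempty A]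
    (μ : ∀ m, (Fin m → A) → ℝ) (k n : ℕ) (x : Fin n → A) : ℝ :=
  μ k (window x 0 k) *
    ∏ i ∈ Finset.Ico k n, μ (k + 1) (window x (i - k) (k + 1)) / μ k (window x (i - k) k)

/-- The `n`-th order relative entropy (in bits) between the process `μ` and its
`k`-th order Markov approximation. -/
noncomputable def relEntMarkov {A : Type*} [Fintype A] [Nonempty A]
    (μ : ∀ m, (Fin m → A) → ℝ) (k n : ℕ) : ℝ :=
  ∑ x : Fin n → A, μ n x * Real.logb 2 (μ n x / markovApproxFam μ k n x)

section Aux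

variable {A : Type*} [Fintype A] [Nonempty A]

lemma sum_snoc_mul (μ : ∀ m, (Fin m → A) → ℝ)
    (hconsist : ∀ m (x : Fin m → A), ∑ a : A, μ (m + 1) (Fin.snoc x a) = μ m x)
    (n : ℕ) (f : (Fin n → A) → ℝ) :
    ∑ x : Fin (n + 1) → A, μ (n + 1) x * f (Fin.init x)
      = ∑ y : Fin n → A, μ n y * f y := by
  rw [← (Fin.snocEquiv (fun _ : Fin (n+1) => A)).sum_comp
      (fun x => μ (n + 1) x * f (Fin.init x))]
  rw [Fintype.sum_prod_type]
  rw [Finset.sum_comm]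
  refine Finset.sum_congr rfl fun y _ => ?_
  rw [← hconsist n y, Finset.sum_mul]
  refine Finset.sum_congr rfl fun a _ => ?_
  have h1 : (Fin.snocEquiv (fun _ : Fin (n+1) => A)) (a, y) = Fin.snoc y a := by
    funext i; simp [Fin.snocEquiv]
  rw [h1, Fin.init_snoc]

lemma sum_cons_mul (μ : ∀ m, (Fin m → A) → ℝ)
    (hstat : ∀ m (x : Fin m → A), ∑ a : A, μ (m + 1) (Fin.cons a x) = μ m x)
    (n : ℕ) (f : (Fin n → A) → ℝ) :
    ∑ x : Fin (n + 1) → A, μ (n + 1) x * f (Fin.tail x)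
      = ∑ y : Fin n → A, μ n y * f y := by
  rw [← (Fin.consEquiv (fun _ : Fin (n+1) => A)).sum_comp
      (fun x => μ (n + 1) x * f (Fin.tail x))]
  rw [Fintype.sum_prod_type]
  rw [Finset.sum_comm]
  refine Finset.sum_congr rfl fun y _ => ?_
  rw [← hstat n y, Finset.sum_mul]
  refine Finset.sum_congr rfl fun a _ => ?_
  have h1 : (Fin.consEquiv (fun _ : Fin (n+1) => A)) (a, y) = Fin.cons a y := rfl
  rw [h1, Fin.tail_cons]

lemma window_init {n : ℕ} (x : Fin (n + 1) → A) {j m : ℕ} (h : j + m ≤ n) :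
    window x j m = window (Fin.init x) j m := by
  funext t
  have ht : j + t.1 < n := by omega
  simp only [window, dif_pos ht, dif_pos (Nat.lt_succ_of_lt ht)]
  rfl

lemma window_tail {n : ℕ} (x : Fin (n + 1) → A) (j m : ℕ) :
    window x (j + 1) m = window (Fin.tail x) j m := by
  funext t
  by_cases ht : j + t.1 < n
  · have ht' : j + 1 + t.1 < n + 1 := by omega
    simp only [window, dif_pos ht, dif_pos ht', Fin.tail]
    congr 1
    ext
    simp [Fin.succ]; omega
  · have ht' : ¬ (j + 1 + t.1 < n + 1) := by omega
    simp only [window, dif_neg ht, dif_neg ht']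

lemma window_all {n : ℕ} (x : Fin n → A) : window x 0 n = x := by
  funext t
  simp only [window, Nat.zero_add, t.2, dif_pos]

lemma sum_window (μ : ∀ m, (Fin m → A) → ℝ)
    (hconsist : ∀ m (x : Fin m → A), ∑ a : A, μ (m + 1) (Fin.snoc x a) = μ m x)
    (hstat : ∀ m (x : Fin m → A), ∑ a : A, μ (m + 1) (Fin.cons a x) = μ m x) :
    ∀ n j m, j + m ≤ n → ∀ f : (Fin m → A) → ℝ,
      ∑ x : Fin n → A, μ n x * f (window x j m) = ∑ y : Fin m → A, μ m y * f y := by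
  intro n
  induction n with
  | zero =>
    intro j m h f
    obtain ⟨rfl, rfl⟩ : j = 0 ∧ m = 0 := by omega
    refine Finset.sum_congr rfl fun x _ => ?_
    congr 1
    exact congrArg f (Subsingleton.elim _ _)
  | succ n ih =>
    intro j m h f
    rcases Nat.lt_or_ge (j + m) (n + 1) with h' | h'
    · have h'' : j + m ≤ n := by omega
      calc ∑ x : Fin (n+1) → A, μ (n+1) x * f (window x j m)
          = ∑ x : Fin (n+1) → A, μ (n+1) x * f (window (Fin.init x) j m) := by
            refine Finset.sum_congr rfl fun x _ => ?_
            rw [window_init x h'']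
        _ = ∑ y : Fin n → A, μ n y * f (window y j m) :=
            sum_snoc_mul μ hconsist n (fun y => f (window y j m))
        _ = ∑ y : Fin m → A, μ m y * f y := ih j m h'' f
    · have hjm : j + m = n + 1 := le_antisymm h h'
      cases j with
      | zero =>
        have hm : m = n + 1 := by omega
        subst hm
        refine Finset.sum_congr rfl fun x _ => ?_
        rw [window_all]
      | succ j' =>
        have h'' : j' + m ≤ n := by omega
        calc ∑ x : Fin (n+1) → A, μ (n+1) x * f (window x (j'+1) m)
            = ∑ x : Fin (n+1) → A, μ (n+1) x * f (window (Fin.tail x) j' m) := by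
              refine Finset.sum_congr rfl fun x _ => ?_
              rw [window_tail]
          _ = ∑ y : Fin n → A, μ n y * f (window y j' m) :=
              sum_cons_mul μ hstat n (fun y => f (window y j' m))
          _ = ∑ y : Fin m → A, μ m y * f y := ih j' m h'' f

end Aux

section Aux2

variable {A : Type*} [Fintype A] [Nonempty A]

/-- `L n = ∑ μ n x logb μ n x`, the negated block entropy. -/
noncomputable def negBlockH (μ : ∀ m, (Fin m → A) → ℝ) (n : ℕ) : ℝ :=
  ∑ x : Fin n → A, μ n x * Real.logb 2 (μ n x)

lemma negBlockH_succ (μ : ∀ m, (Fin m → A) → ℝ)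
    (hpos : ∀ m x, 0 < μ m x)
    (hconsist : ∀ m (x : Fin m → A), ∑ a : A, μ (m + 1) (Fin.snoc x a) = μ m x)
    (m : ℕ) :
    negBlockH μ (m + 1) = negBlockH μ m - condEntropy μ m := by
  have key : condEntropy μ m = negBlockH μ m - negBlockH μ (m + 1) := by
    unfold condEntropy negBlockH
    have : ∀ x : Fin (m+1) → A,
        μ (m+1) x * Real.logb 2 (μ m (Fin.init x) / μ (m+1) x)
          = μ (m+1) x * Real.logb 2 (μ m (Fin.init x))
            - μ (m+1) x * Real.logb 2 (μ (m+1) x) := by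
      intro x
      rw [Real.logb_div (hpos m (Fin.init x)).ne' (hpos (m+1) x).ne']
      ring
    rw [Finset.sum_congr rfl fun x _ => this x, Finset.sum_sub_distrib]
    rw [sum_snoc_mul μ hconsist m (fun y => Real.logb 2 (μ m y))]
  linarith

lemma negBlockH_eq (μ : ∀ m, (Fin m → A) → ℝ)
    (hpos : ∀ m x, 0 < μ m x)
    (hnorm : ∀ x : Fin 0 → A, μ 0 x = 1)
    (hconsist : ∀ m (x : Fin m → A), ∑ a : A, μ (m + 1) (Fin.snoc x a) = μ m x)
    (n : ℕ) :
    negBlockH μ n = - ∑ m ∈ Finset.range n, condEntropy μ m := by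
  induction n with
  | zero =>
    have h0 : ∀ x : Fin 0 → A, μ 0 x * Real.logb 2 (μ 0 x) = 0 := by
      intro x; rw [hnorm x]; simp
    simp [negBlockH, h0]
  | succ n ih =>
    rw [negBlockH_succ μ hpos hconsist n, ih, Finset.sum_range_succ]
    ring

lemma relEntMarkov_eq (μ : ∀ m, (Fin m → A) → ℝ)
    (hpos : ∀ m x, 0 < μ m x)
    (hconsist : ∀ m (x : Fin m → A), ∑ a : A, μ (m + 1) (Fin.snoc x a) = μ m x)
    (hstat : ∀ m (x : Fin m → A), ∑ a : A, μ (m + 1) (Fin.cons a x) = μ m x)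
    {k n : ℕ} (hkn : k ≤ n) :
    relEntMarkov μ k n
      = negBlockH μ n - negBlockH μ k + (n - k : ℕ) * condEntropy μ k := by
  have hmark : ∀ x : Fin n → A, 0 < markovApproxFam μ k n x := fun x =>
    mul_pos (hpos _ _) (Finset.prod_pos fun i _ => div_pos (hpos _ _) (hpos _ _))
  have hlog : ∀ x : Fin n → A,
      Real.logb 2 (markovApproxFam μ k n x)
        = Real.logb 2 (μ k (window x 0 k))
          + ∑ i ∈ Finset.Ico k n,
              (Real.logb 2 (μ (k+1) (window x (i-k) (k+1)))
                - Real.logb 2 (μ k (window x (i-k) k))) := by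
    intro x
    unfold markovApproxFam
    rw [Real.logb_mul (hpos _ _).ne'
      (Finset.prod_pos fun i _ => div_pos (hpos _ _) (hpos _ _)).ne']
    rw [Real.logb_prod _ _ fun i _ => (div_pos (hpos _ _) (hpos _ _)).ne']
    congr 1
    exact Finset.sum_congr rfl fun i _ =>
      Real.logb_div (hpos _ _).ne' (hpos _ _).ne'
  have e1 : ∀ x : Fin n → A,
      μ n x * Real.logb 2 (μ n x / markovApproxFam μ k n x)
        = μ n x * Real.logb 2 (μ n x)
          - μ n x * Real.logb 2 (μ k (window x 0 k))
          - ∑ i ∈ Finset.Ico k n,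
              (μ n x * Real.logb 2 (μ (k+1) (window x (i-k) (k+1)))
                - μ n x * Real.logb 2 (μ k (window x (i-k) k))) := by
    intro x
    rw [Real.logb_div (hpos n x).ne' (hmark x).ne', hlog x]
    rw [mul_sub, mul_add, Finset.mul_sum]
    simp only [mul_sub]
    ring
  have step : relEntMarkov μ k n
      = negBlockH μ n
        - (∑ x : Fin n → A, μ n x * Real.logb 2 (μ k (window x 0 k)))
        - ∑ i ∈ Finset.Ico k n,
            ((∑ x : Fin n → A, μ n x * Real.logb 2 (μ (k+1) (window x (i-k) (k+1))))
              - ∑ x : Fin n → A, μ n x * Real.logb 2 (μ k (window x (i-k) k))) := by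
    unfold relEntMarkov negBlockH
    rw [Finset.sum_congr rfl fun x _ => e1 x]
    rw [Finset.sum_sub_distrib, Finset.sum_sub_distrib]
    congr 1
    rw [Finset.sum_comm (s := (Finset.univ : Finset (Fin n → A))) (t := Finset.Ico k n)]
    exact Finset.sum_congr rfl fun i _ => Finset.sum_sub_distrib _ _
  have h0 : (∑ x : Fin n → A, μ n x * Real.logb 2 (μ k (window x 0 k)))
      = negBlockH μ k := by
    simpa [negBlockH] using sum_window μ hconsist hstat n 0 k (by omega)
      (fun y => Real.logb 2 (μ k y))
  have hico : ∀ i ∈ Finset.Ico k n,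
      ((∑ x : Fin n → A, μ n x * Real.logb 2 (μ (k+1) (window x (i-k) (k+1))))
        - ∑ x : Fin n → A, μ n x * Real.logb 2 (μ k (window x (i-k) k)))
      = - condEntropy μ k := by
    intro i hi
    rw [Finset.mem_Ico] at hi
    rw [sum_window μ hconsist hstat n (i-k) (k+1) (by omega)
      (fun y => Real.logb 2 (μ (k+1) y))]
    rw [sum_window μ hconsist hstat n (i-k) k (by omega)
      (fun y => Real.logb 2 (μ k y))]
    have := negBlockH_succ μ hpos hconsist k
    unfold negBlockH at this
    linarith
  rw [step, h0, Finset.sum_congr rfl hico, Finset.sum_const, Nat.card_Ico,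
    nsmul_eq_mul]
  ring

end Aux2


/-- for a stationary process with marginals `μ`, the relative
entropy rate between the process and its `k`-th order Markov approximation is
`H_k − H∞`, where `H∞` is the entropy rate (the limit of the nonincreasing
conditional entropies `H_k`); consequently this rate tends to `0` as `k → ∞`. -/
theorem relative_entropy_rate_markov_approx
    {A : Type*} [Fintype A] [Nonempty A]
    (μ : ∀ m, (Fin m → A) → ℝ)
    (hpos : ∀ m x, 0 < μ m x)
    (hnorm : ∀ x : Fin 0 → A, μ 0 x = 1)
    (hconsist : ∀ m (x : Fin m → A), ∑ a : A, μ (m + 1) (Fin.snoc x a) = μ m x)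
    (hstat : ∀ m (x : Fin m → A), ∑ a : A, μ (m + 1) (Fin.cons a x) = μ m x)
    (Hinf : ℝ) (hanti : Antitone (condEntropy μ))
    (hH : Tendsto (condEntropy μ) atTop (nhds Hinf)) :
    (∀ k, Tendsto (fun n => relEntMarkov μ k n / n) atTop
        (nhds (condEntropy μ k - Hinf))) ∧
    Tendsto (fun k => condEntropy μ k - Hinf) atTop (nhds 0) := by
  constructor
  · intro k
    have hces : Tendsto (fun n : ℕ => negBlockH μ n / n) atTop (nhds (-Hinf)) := by
      have := (hH.cesaro).neg
      refine this.congr fun n => ?_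
      rw [negBlockH_eq μ hpos hnorm hconsist n, neg_div, div_eq_inv_mul]
    have h2 : Tendsto (fun n : ℕ => negBlockH μ k / (n : ℝ)) atTop (nhds 0) :=
      tendsto_const_div_atTop_nhds_zero_nat _
    have h3 : Tendsto (fun n : ℕ => (k : ℝ) / (n : ℝ)) atTop (nhds 0) :=
      tendsto_const_div_atTop_nhds_zero_nat _
    have h4 : Tendsto
        (fun n : ℕ => (1 - (k : ℝ) / n) * condEntropy μ k) atTop
        (nhds ((1 - 0) * condEntropy μ k)) :=
      ((tendsto_const_nhds.sub h3)).mul_const _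
    have htot : Tendsto
        (fun n : ℕ => negBlockH μ n / n - negBlockH μ k / n
          + (1 - (k : ℝ) / n) * condEntropy μ k) atTop
        (nhds (-Hinf - 0 + (1 - 0) * condEntropy μ k)) :=
      (hces.sub h2).add h4
    have hlim : -Hinf - 0 + (1 - 0) * condEntropy μ k
        = condEntropy μ k - Hinf := by ring
    rw [hlim] at htot
    refine htot.congr' ?_
    filter_upwards [eventually_ge_atTop (k + 1)] with n hn
    have hkn : k ≤ n := by omega
    have hn0 : (n : ℝ) ≠ 0 := Nat.cast_ne_zero.mpr (by omega)
    rw [relEntMarkov_eq μ hpos hconsist hstat hkn]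
    rw [Nat.cast_sub hkn]
    field_simp
  · have := hH.sub (tendsto_const_nhds (x := Hinf))
    simpa using this
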